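/- Let P be a finite poset with n ≥ 2 elements that is (2+2)-free, (1+1+1)-free, and irreducible with respect to ordinal sum. Then the number of lower sets of P (including ∅ and P) is exactly 2n. -/

import Mathlib

/-- `P` is `(2+2)`-free: there are no four distinct elements `a, b, c, d` with `a < b` and
`c < d` such that each of `a, b` is incomparable with each of `c, d`. -/
def TwoTwoFree (P : Type*) [PartialOrder P] : Prop :=
  ¬ ∃ a b c d : P, a < b ∧ c < d ∧ a ≠ c ∧ a ≠ d ∧ b ≠ c ∧ b ≠ d ∧
    ¬ a ≤ c ∧ ¬ c ≤ a ∧ ¬ a ≤ d ∧ ¬ d ≤ a ∧ ¬ b ≤ c ∧ ¬ c ≤ b ∧ ¬ b ≤ d ∧ ¬ d ≤ b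

/-- `P` is `(1+1+1)`-free: `P` contains no antichain of three elements. -/
def OneOneOneFree (P : Type*) [PartialOrder P] : Prop :=
  ¬ ∃ a b c : P, a ≠ b ∧ a ≠ c ∧ b ≠ c ∧
    ¬ a ≤ b ∧ ¬ b ≤ a ∧ ¬ a ≤ c ∧ ¬ c ≤ a ∧ ¬ b ≤ c ∧ ¬ c ≤ b

/-- `P` is irreducible with respect to ordinal sum: `P` cannot be partitioned into two
nonempty subsets `A, B` such that `a < b` for every `a ∈ A` and `b ∈ B`. -/
def OrdinalSumIrreducible (P : Type*) [PartialOrder P] : Prop :=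
  ¬ ∃ A B : Set P, A.Nonempty ∧ B.Nonempty ∧ Disjoint A B ∧ A ∪ B = Set.univ ∧
    ∀ a ∈ A, ∀ b ∈ B, a < b

section Aux

open Classical

variable {P : Type*} [PartialOrder P]

/-- downsets form a chain in a (2+2)-free poset -/
private lemma down_chain (h22 : TwoTwoFree P) (x y : P) :
    (∀ a, a < x → a < y) ∨ (∀ a, a < y → a < x) := by
  by_contra h
  push_neg at h
  obtain ⟨⟨a, hax, hay⟩, ⟨b, hby, hbx⟩⟩ := h
  have h1 : ¬ a ≤ y := by
    intro hle
    rcases lt_or_eq_of_le hle with h | rfl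
    · exact hay h
    · exact hbx (hby.trans hax)
  have h2 : ¬ y ≤ a := fun hle => hbx ((hby.trans_le hle).trans hax)
  have h3 : ¬ b ≤ x := by
    intro hle
    rcases lt_or_eq_of_le hle with h | rfl
    · exact hbx h
    · exact hay (hax.trans hby)
  have h4 : ¬ x ≤ b := fun hle => hay (hax.trans_le (hle.trans hby.le))
  have h5 : ¬ a ≤ b := fun hle => hay (hle.trans_lt hby)
  have h6 : ¬ b ≤ a := fun hle => hbx (hle.trans_lt hax)
  have h7 : ¬ x ≤ y := fun hle => hay (hax.trans_le hle)
  have h8 : ¬ y ≤ x := fun hle => hbx (hby.trans_le hle)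
  exact h22 ⟨a, x, b, y, hax, hby,
    fun he => h5 he.le, fun he => h1 he.le, fun he => h4 he.le, fun he => h7 he.le,
    h5, h6, h1, h2, h4, h3, h7, h8⟩

private lemma subtype_twoTwoFree (h22 : TwoTwoFree P) (p : P → Prop) :
    TwoTwoFree {x : P // p x} := by
  rintro ⟨a, b, c, d, k1, k2, k3, k4, k5, k6, k7, k8, k9, k10, k11, k12, k13, k14⟩
  refine h22 ⟨a.1, b.1, c.1, d.1, Subtype.coe_lt_coe.mpr k1, Subtype.coe_lt_coe.mpr k2,
    Subtype.coe_ne_coe.mpr k3, Subtype.coe_ne_coe.mpr k4, Subtype.coe_ne_coe.mpr k5,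
    Subtype.coe_ne_coe.mpr k6, ?_, ?_, ?_, ?_, ?_, ?_, ?_, ?_⟩ <;>
  · intro hle
    first
      | exact k7 (Subtype.coe_le_coe.mp hle) | exact k8 (Subtype.coe_le_coe.mp hle)
      | exact k9 (Subtype.coe_le_coe.mp hle) | exact k10 (Subtype.coe_le_coe.mp hle)
      | exact k11 (Subtype.coe_le_coe.mp hle) | exact k12 (Subtype.coe_le_coe.mp hle)
      | exact k13 (Subtype.coe_le_coe.mp hle) | exact k14 (Subtype.coe_le_coe.mp hle)

private lemma subtype_oneOneOneFree (h111 : OneOneOneFree P) (p : P → Prop) :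
    OneOneOneFree {x : P // p x} := by
  rintro ⟨a, b, c, k1, k2, k3, k4, k5, k6, k7, k8, k9⟩
  refine h111 ⟨a.1, b.1, c.1, Subtype.coe_ne_coe.mpr k1, Subtype.coe_ne_coe.mpr k2,
    Subtype.coe_ne_coe.mpr k3, ?_, ?_, ?_, ?_, ?_, ?_⟩ <;>
  · intro hle
    first
      | exact k4 (Subtype.coe_le_coe.mp hle) | exact k5 (Subtype.coe_le_coe.mp hle)
      | exact k6 (Subtype.coe_le_coe.mp hle) | exact k7 (Subtype.coe_le_coe.mp hle)
      | exact k8 (Subtype.coe_le_coe.mp hle) | exact k9 (Subtype.coe_le_coe.mp hle)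

/-- the key counting step: removing the "leaf" `v` drops the number of lower sets by 2. -/
private lemma step_count [Fintype P] (v u : P) (hvu1 : ¬ v ≤ u) (hvu2 : ¬ u ≤ v)
    (huniq : ∀ z : P, ¬ z ≤ v → ¬ v ≤ z → z = u) :
    Nat.card {s : Set P // IsLowerSet s}
      = Nat.card {t : Set {x : P // x ≠ v} // IsLowerSet t} + 2 := by
  classical
  have hune : u ≠ v := fun h => hvu1 (h ▸ le_refl v)
  set P' := {x : P // x ≠ v}
  set D : Set P := {x | x < v} with hDdef
  have hD : IsLowerSet D := fun a b hba ha => lt_of_le_of_lt hba ha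
  have comp : ∀ x : P, x ≠ v → x ≠ u → (x < v ∨ v < x) := by
    intro x hxv hxu
    by_cases h1 : x ≤ v
    · exact Or.inl (lt_of_le_of_ne h1 hxv)
    · by_cases h2 : v ≤ x
      · exact Or.inr (lt_of_le_of_ne h2 (fun he => hxv he.symm))
      · exact absurd (huniq x h1 h2) hxu
  have hDu : IsLowerSet (D ∪ {u}) := by
    intro a b hba ha
    rcases ha with ha | ha
    · exact Or.inl (lt_of_le_of_lt hba ha)
    · rcases eq_or_lt_of_le hba with rfl | hlt
      · exact Or.inr ha
      · have ha' : a = u := ha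
        subst ha'
        have hbv : b ≠ v := by
          rintro rfl
          exact hvu1 hlt.le
        rcases comp b hbv (ne_of_lt hlt) with h | h
        · exact Or.inl h
        · exact absurd (h.trans hlt).le hvu1
  have hIic : IsLowerSet (Set.Iic v) := isLowerSet_Iic v
  set s1 : Set P := Set.Iic v with hs1def
  set s2 : Set P := (D ∪ {u}) ∪ Set.Iic v with hs2def
  have hs2 : IsLowerSet s2 := hDu.union hIic
  have hvnotimg : ∀ t : Set P', v ∉ Subtype.val '' t := by
    rintro t ⟨x, -, hxv⟩
    exact x.2 hxv
  have himg_lower_of : ∀ t : Set P', IsLowerSet t → ∀ x : P, x ∈ Subtype.val '' t →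
      ∀ y : P, y ≤ x → y ≠ v → y ∈ Subtype.val '' t := by
    rintro t ht x ⟨⟨x', hx'⟩, hxt, rfl⟩ y hyx hyv
    exact ⟨⟨y, hyv⟩, ht (show (⟨y, hyv⟩ : P') ≤ ⟨x', hx'⟩ from hyx) hxt, rfl⟩
  have hext : ∀ (t : Set P'), IsLowerSet t → ¬ IsLowerSet (Subtype.val '' t) →
      IsLowerSet (Subtype.val '' t ∪ {v}) := by
    intro t ht hns
    simp only [IsLowerSet] at hns
    push_neg at hns
    obtain ⟨x, y, hyx, hx, hy⟩ := hns
    have hyv : y = v := by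
      by_contra h
      exact hy (himg_lower_of t ht x hx y hyx h)
    rw [hyv] at hyx hy
    have hvx : v < x := lt_of_le_of_ne hyx (ne_of_mem_of_not_mem hx hy).symm
    intro a b hba ha
    rcases ha with ha | ha
    · by_cases hbv : b = v
      · exact Or.inr hbv
      · exact Or.inl (himg_lower_of t ht a ha b hba hbv)
    · have ha' : a = v := ha
      subst ha'
      rcases eq_or_lt_of_le hba with rfl | hlt
      · exact Or.inr rfl
      · exact Or.inl (himg_lower_of t ht x hx b (hlt.trans hvx).le (ne_of_lt hlt))
  set Ψ : ({t : Set P' // IsLowerSet t} ⊕ Bool) → {s : Set P // IsLowerSet s} :=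
    Sum.elim
      (fun t => if h : IsLowerSet (Subtype.val '' t.val) then ⟨Subtype.val '' t.val, h⟩
        else ⟨Subtype.val '' t.val ∪ {v}, hext t.val t.prop h⟩)
      (fun b => bif b then ⟨s2, hs2⟩ else ⟨s1, hIic⟩)
    with hΨdef
  have himg_inj : ∀ t t' : Set P', Subtype.val '' t = Subtype.val '' t' → t = t' :=
    fun t t' h => Set.image_injective.mpr Subtype.coe_injective h
  have hvs1 : v ∈ s1 := Set.mem_Iic.mpr le_rfl
  have hvs2 : v ∈ s2 := Or.inr (Set.mem_Iic.mpr le_rfl)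
  have hus2 : u ∈ s2 := Or.inl (Or.inr rfl)
  have hus1 : u ∉ s1 := fun h => hvu2 h
  have hs1v : s1 \ {v} = D := by
    ext x
    simp only [Set.mem_diff, Set.mem_singleton_iff, hs1def, Set.mem_Iic, hDdef, Set.mem_setOf_eq]
    constructor
    · rintro ⟨h1, h2⟩; exact lt_of_le_of_ne h1 h2
    · intro h; exact ⟨h.le, ne_of_lt h⟩
  have hs2v : s2 \ {v} = D ∪ {u} := by
    ext x
    simp only [hs2def, Set.mem_diff, Set.mem_union, Set.mem_singleton_iff, Set.mem_Iic,
      hDdef, Set.mem_setOf_eq]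
    constructor
    · rintro ⟨h1 | h1, h2⟩
      · exact h1
      · exact Or.inl (lt_of_le_of_ne h1 h2)
    · intro h
      refine ⟨Or.inl h, ?_⟩
      rcases h with h | h
      · exact ne_of_lt h
      · exact h ▸ hune
  have himg_diff : ∀ t : Set P', (Subtype.val '' t ∪ {v}) \ {v} = Subtype.val '' t := by
    intro t
    rw [Set.union_diff_right]
    exact Set.diff_singleton_eq_self (hvnotimg t)
  have hinj : Function.Injective Ψ := by
    have himgD : ∀ (t : Set P') (h : ¬ IsLowerSet (Subtype.val '' t)) (s : Set P),
        Subtype.val '' t ∪ {v} = s → IsLowerSet (s \ {v}) → False := by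
      intro t h s hs hls
      apply h
      have : Subtype.val '' t = s \ {v} := by rw [← hs, himg_diff]
      rw [this]
      exact hls
    rintro (t | b) (t' | b') heq <;>
      simp only [hΨdef, Sum.elim_inl, Sum.elim_inr] at heq
    · split_ifs at heq with h h' h'
      · rw [Subtype.mk.injEq] at heq
        exact congrArg Sum.inl (Subtype.ext (himg_inj _ _ heq))
      · rw [Subtype.mk.injEq] at heq
        exact absurd (heq ▸ Or.inr rfl : v ∈ Subtype.val '' t.val) (hvnotimg t.val)
      · rw [Subtype.mk.injEq] at heq
        exact absurd (heq.symm ▸ Or.inr rfl : v ∈ Subtype.val '' t'.val) (hvnotimg t'.val)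
      · rw [Subtype.mk.injEq] at heq
        have : Subtype.val '' t.val = Subtype.val '' t'.val := by
          have h2 := congrArg (· \ ({v} : Set P)) heq
          simpa only [himg_diff] using h2
        exact congrArg Sum.inl (Subtype.ext (himg_inj _ _ this))
    · exfalso
      cases b' <;> simp only [Bool.cond_false, Bool.cond_true] at heq <;>
        split_ifs at heq with h <;> rw [Subtype.mk.injEq] at heq
      · exact hvnotimg t.val (heq ▸ hvs1)
      · exact himgD t.val h s1 heq (hs1v ▸ hD)
      · exact hvnotimg t.val (heq ▸ hvs2)
      · exact himgD t.val h s2 heq (hs2v ▸ hDu)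
    · exfalso
      cases b <;> simp only [Bool.cond_false, Bool.cond_true] at heq <;>
        split_ifs at heq with h <;> rw [Subtype.mk.injEq] at heq
      · exact hvnotimg t'.val (heq.symm ▸ hvs1)
      · exact himgD t'.val h s1 heq.symm (hs1v ▸ hD)
      · exact hvnotimg t'.val (heq.symm ▸ hvs2)
      · exact himgD t'.val h s2 heq.symm (hs2v ▸ hDu)
    · cases b <;> cases b' <;>
        simp only [Bool.cond_false, Bool.cond_true, Subtype.mk.injEq] at heq
      · rfl
      · exact absurd (heq.symm ▸ hus2) hus1
      · exact absurd (heq ▸ hus2) hus1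
      · rfl
  have hsurj : Function.Surjective Ψ := by
    rintro ⟨s, hs⟩
    by_cases hv : v ∈ s
    · set t : Set P' := Subtype.val ⁻¹' s with htdef
      have ht : IsLowerSet t := fun a b hba ha => hs (Subtype.coe_le_coe.mpr hba) ha
      have himg : Subtype.val '' t = s \ {v} := by
        ext x
        simp only [htdef, Set.mem_diff, Set.mem_singleton_iff]
        constructor
        · rintro ⟨⟨x', hx'⟩, hmem, rfl⟩
          exact ⟨hmem, hx'⟩
        · rintro ⟨hxs, hxv⟩
          exact ⟨⟨x, hxv⟩, hxs, rfl⟩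
      by_cases hS : IsLowerSet (s \ {v})
      · -- s is s1 or s2
        have hDsub : D ⊆ s \ {v} := by
          intro d hd
          exact ⟨hs hd.le hv, ne_of_lt hd⟩
        have hsub : s \ {v} ⊆ D ∪ {u} := by
          rintro x ⟨hxs, hxv⟩
          by_cases hxu : x = u
          · exact Or.inr hxu
          · rcases comp x hxv hxu with h | h
            · exact Or.inl h
            · exact absurd (hS h.le ⟨hxs, hxv⟩) (fun hh => hh.2 rfl)
        by_cases hus : u ∈ s
        · refine ⟨Sum.inr true, Subtype.ext ?_⟩
          simp only [hΨdef, Sum.elim_inr, Bool.cond_true]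
          apply Set.Subset.antisymm
          · intro x hx
            rcases hx with (hx | hx) | hx
            · exact (hDsub hx).1
            · have hxu : x = u := hx
              rw [hxu]; exact hus
            · exact hs hx hv
          · intro x hx
            by_cases hxv : x = v
            · exact Or.inr (Set.mem_Iic.mpr hxv.le)
            · exact Or.inl (hsub ⟨hx, hxv⟩)
        · refine ⟨Sum.inr false, Subtype.ext ?_⟩
          simp only [hΨdef, Sum.elim_inr, Bool.cond_false]
          apply Set.Subset.antisymm
          · intro x hx
            exact hs hx hv
          · intro x hx
            by_cases hxv : x = v
            · exact Set.mem_Iic.mpr hxv.le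
            · rcases hsub ⟨hx, hxv⟩ with h | h
              · exact Set.mem_Iic.mpr h.le
              · have hxu : x = u := h
                rw [hxu] at hx
                exact absurd hx hus
      · refine ⟨Sum.inl ⟨t, ht⟩, Subtype.ext ?_⟩
        simp only [hΨdef, Sum.elim_inl]
        rw [dif_neg (by rw [himg]; exact hS)]
        show Subtype.val '' t ∪ {v} = s
        rw [himg]
        ext x
        simp only [Set.mem_union, Set.mem_diff, Set.mem_singleton_iff]
        constructor
        · rintro (⟨h1, h2⟩ | h)
          · exact h1
          · rw [h]; exact hv
        · intro hx
          by_cases hxv : x = v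
          · exact Or.inr hxv
          · exact Or.inl ⟨hx, hxv⟩
    · set t : Set P' := Subtype.val ⁻¹' s with htdef
      have ht : IsLowerSet t := fun a b hba ha => hs (Subtype.coe_le_coe.mpr hba) ha
      have himg : Subtype.val '' t = s := by
        ext x
        simp only [htdef]
        constructor
        · rintro ⟨⟨x', hx'⟩, hmem, rfl⟩
          exact hmem
        · intro hxs
          exact ⟨⟨x, fun hh => hv (hh ▸ hxs)⟩, hxs, rfl⟩
      refine ⟨Sum.inl ⟨t, ht⟩, Subtype.ext ?_⟩
      simp only [hΨdef, Sum.elim_inl]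
      rw [dif_pos (by rw [himg]; exact hs)]
      exact himg
  have := Nat.card_congr (Equiv.ofBijective Ψ ⟨hinj, hsurj⟩)
  rw [← this, Nat.card_sum]
  simp [Nat.card_eq_fintype_card]
  exact Fintype.card_congr (Equiv.refl _)

/-- connectivity transfers to the subtype after removing a leaf -/
private lemma conn_subtype (v u : P) (hvu1 : ¬ v ≤ u) (hvu2 : ¬ u ≤ v)
    (huniq : ∀ z : P, ¬ z ≤ v → ¬ v ≤ z → z = u)
    (hconn : ∀ x y : P, Relation.ReflTransGen (fun a b : P => ¬ a ≤ b ∧ ¬ b ≤ a) x y) :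
    ∀ x y : {z : P // z ≠ v},
      Relation.ReflTransGen (fun a b : {z : P // z ≠ v} => ¬ a ≤ b ∧ ¬ b ≤ a) x y := by
  have hune : u ≠ v := fun h => hvu1 (h ▸ le_refl v)
  set P' := {z : P // z ≠ v}
  set r : P → P → Prop := fun a b => ¬ a ≤ b ∧ ¬ b ≤ a with hrdef
  set r' : P' → P' → Prop := fun a b => ¬ a ≤ b ∧ ¬ b ≤ a with hr'def
  set g : P → P' := fun c => if h : c = v then ⟨u, hune⟩ else ⟨c, h⟩ with hgdef
  have key : ∀ x y : P, Relation.ReflTransGen r x y →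
      Relation.ReflTransGen r' (g x) (g y) := by
    intro x y h
    induction h with
    | refl => exact Relation.ReflTransGen.refl
    | tail hxb hbc ih =>
      rename_i b c
      refine ih.trans ?_
      by_cases hb : b = v
      · have hcu : c = u := huniq c (hb ▸ hbc.2) (hb ▸ hbc.1)
        have hcv : c ≠ v := fun h => hbc.1 (le_of_eq (hb.trans h.symm))
        have hgeq : g b = g c := by
          rw [hb]
          simp only [hgdef, dif_pos rfl, dif_neg hcv]
          exact Subtype.ext hcu.symm
        rw [hgeq]
      · by_cases hc : c = v
        · have hbu : b = u := huniq b (hc ▸ hbc.1) (hc ▸ hbc.2)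
          have hgeq : g b = g c := by
            rw [hc]
            simp only [hgdef, dif_neg hb, dif_pos rfl]
            exact Subtype.ext hbu
          rw [hgeq]
        · refine Relation.ReflTransGen.single ?_
          simp only [hgdef, dif_neg hb, dif_neg hc, hr'def]
          exact ⟨fun hle => hbc.1 (Subtype.coe_le_coe.mpr hle),
            fun hle => hbc.2 (Subtype.coe_le_coe.mpr hle)⟩
  intro x y
  have h := key x.val y.val (hconn x.val y.val)
  have hx : g x.val = x := by simp only [hgdef, dif_neg x.2]
  have hy : g y.val = y := by simp only [hgdef, dif_neg y.2]
  rwa [hx, hy] at h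

/-- main counting lemma, by induction on the cardinality -/
private lemma aux_count : ∀ (n : ℕ) (Q : Type u) [PartialOrder Q] [Fintype Q],
    Fintype.card Q = n →
    TwoTwoFree Q → OneOneOneFree Q →
    (∀ x y : Q, Relation.ReflTransGen (fun a b : Q => ¬ a ≤ b ∧ ¬ b ≤ a) x y) →
    Nonempty Q →
    Nat.card {s : Set Q // IsLowerSet s} = 2 * n := by
  intro n
  induction n with
  | zero =>
    intro Q _ _ hcard _ _ _ hne
    have : Nonempty Q := hne
    exact absurd hcard Fintype.card_ne_zero
  | succ n ih =>
    intro Q _ _ hcard h22 h111 hconn hne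
    classical
    by_cases hn : n = 0
    · -- base case: one element
      subst hn
      have hsing : Subsingleton Q := Fintype.card_le_one_iff_subsingleton.mp (le_of_eq hcard)
      have hall : ∀ s : Set Q, IsLowerSet s := by
        intro s a b hba ha
        rwa [Subsingleton.elim b a]
      set Ψ : Bool → {s : Set Q // IsLowerSet s} :=
        fun b => bif b then ⟨Set.univ, hall _⟩ else ⟨∅, hall _⟩ with hΨdef
      have hbij : Function.Bijective Ψ := by
        obtain ⟨x⟩ := hne
        constructor
        · intro b b' heq
          cases b <;> cases b' <;>
            simp only [hΨdef, Bool.cond_false, Bool.cond_true, Subtype.mk.injEq] at heq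
          · rfl
          · have hmem : x ∈ (∅ : Set Q) := by rw [heq]; exact Set.mem_univ x
            exact absurd hmem (Set.notMem_empty x)
          · have hmem : x ∈ (∅ : Set Q) := by rw [← heq]; exact Set.mem_univ x
            exact absurd hmem (Set.notMem_empty x)
          · rfl
        · rintro ⟨s, -⟩
          rcases Set.eq_empty_or_nonempty s with rfl | ⟨y, hy⟩
          · exact ⟨false, rfl⟩
          · refine ⟨true, Subtype.ext ?_⟩
            simp only [hΨdef, Bool.cond_true]
            symm
            apply Set.eq_univ_of_forall
            intro z
            rwa [Subsingleton.elim z y]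
      rw [← Nat.card_congr (Equiv.ofBijective Ψ hbij)]
      simp
    · -- inductive step
      have hn1 : 1 ≤ n := Nat.one_le_iff_ne_zero.mpr hn
      have hcard2 : 1 < Fintype.card Q := by omega
      -- find v with maximal strict downset
      obtain ⟨v, -, hv⟩ := Finset.exists_max_image Finset.univ
        (fun y : Q => (Finset.univ.filter (fun x => x < y)).card) Finset.univ_nonempty
      have hDv : ∀ y : Q, ∀ a, a < y → a < v := by
        intro y
        rcases down_chain h22 y v with h | h
        · exact h
        · have hsub : Finset.univ.filter (fun x => x < v) ⊆
              Finset.univ.filter (fun x => x < y) := by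
            intro a ha
            simp only [Finset.mem_filter, Finset.mem_univ, true_and] at ha ⊢
            exact h a ha
          have heq := Finset.eq_of_subset_of_card_le hsub (hv y (Finset.mem_univ y))
          intro a ha
          have : a ∈ Finset.univ.filter (fun x => x < v) := by
            rw [heq]
            simp only [Finset.mem_filter, Finset.mem_univ, true_and]
            exact ha
          simpa using this
      -- find the unique element incomparable to v
      obtain ⟨w, hw⟩ := Fintype.exists_ne_of_one_lt_card hcard2 v
      obtain ⟨u, hu⟩ : ∃ u : Q, ¬ v ≤ u ∧ ¬ u ≤ v := by
        rcases (hconn v w).cases_head with heq | ⟨c, hc, -⟩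
        · exact absurd heq.symm hw
        · exact ⟨c, hc⟩
      have huniq : ∀ z : Q, ¬ z ≤ v → ¬ v ≤ z → z = u := by
        intro z hz1 hz2
        by_contra hzu
        by_cases hcmp : z ≤ u ∨ u ≤ z
        · rcases hcmp with h | h
          · have : z < u := lt_of_le_of_ne h hzu
            exact hz1 (hDv u z this).le
          · have : u < z := lt_of_le_of_ne h (fun he => hzu he.symm)
            exact hu.2 (hDv z u this).le
        · push_neg at hcmp
          exact h111 ⟨z, u, v, hzu, fun he => hz1 he.le, fun he => hu.2 he.le,
            hcmp.1, hcmp.2, hz1, hz2, hu.2, hu.1⟩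
      -- the subtype
      have hcard' : Fintype.card {x : Q // x ≠ v} = n := by
        have h1 : Fintype.card {x : Q // ¬ x = v} = Fintype.card Q
            - Fintype.card {x : Q // x = v} := Fintype.card_subtype_compl _
        rw [Fintype.card_subtype_eq, hcard] at h1
        simpa using h1
      have hne' : Nonempty {x : Q // x ≠ v} := by
        rw [← Fintype.card_pos_iff, hcard']
        omega
      have hconn' := conn_subtype v u hu.1 hu.2 huniq hconn
      have ihres := ih {x : Q // x ≠ v} hcard' (subtype_twoTwoFree h22 _)
        (subtype_oneOneOneFree h111 _) hconn' hne'
      rw [step_count v u hu.1 hu.2 huniq, ihres]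
      ring

/-- irreducibility implies connectivity of the incomparability graph -/
private lemma conn_of_irr [Fintype P] [Nonempty P] (hirr : OrdinalSumIrreducible P) :
    ∀ x y : P, Relation.ReflTransGen (fun a b : P => ¬ a ≤ b ∧ ¬ b ≤ a) x y := by
  classical
  set r : P → P → Prop := fun a b => ¬ a ≤ b ∧ ¬ b ≤ a with hrdef
  have hsym : Symmetric r := fun a b h => ⟨h.2, h.1⟩
  by_contra h
  push_neg at h
  obtain ⟨x, y, hxy⟩ := h
  obtain ⟨m, -, hm⟩ : ∃ m ∈ (Finset.univ : Finset P), ∀ x ∈ (Finset.univ : Finset P), ¬ m < x := by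
    obtain ⟨m, hm⟩ := Finset.exists_maximal (Finset.univ_nonempty (α := P))
    exact ⟨m, Finset.mem_univ m, fun x _ hx => hm.not_gt (Finset.mem_univ x) hx⟩
  set C : Set P := {z | Relation.ReflTransGen r m z} with hCdef
  have hCne : ∃ z, z ∉ C := by
    by_contra hall
    push_neg at hall
    haveI : Std.Symm r := ⟨fun a b h => hsym h⟩
    exact hxy (((Relation.ReflTransGen.symmetric (r := r)).symm _ _ (hall x)).trans (hall y))
  obtain ⟨x0, hx0⟩ := hCne
  apply hirr
  refine ⟨Cᶜ, C, ⟨x0, hx0⟩, ⟨m, Relation.ReflTransGen.refl⟩, disjoint_compl_left,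
    Set.compl_union_self C, ?_⟩
  intro a ha c hc
  have key : ∀ c : P, Relation.ReflTransGen r m c → a < c := by
    intro c hcC
    induction hcC with
    | refl =>
      have ham : a ≠ m := by rintro rfl; exact ha Relation.ReflTransGen.refl
      have hcmp : a ≤ m ∨ m ≤ a := by
        by_contra hcm
        push_neg at hcm
        exact ha (Relation.ReflTransGen.single ⟨hcm.2, hcm.1⟩)
      rcases hcmp with hle | hle
      · exact lt_of_le_of_ne hle ham
      · exact absurd (lt_of_le_of_ne hle (fun he => ham he.symm)) (hm a (Finset.mem_univ a))
    | tail hmb hbc ihab =>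
      rename_i b c
      have hac : a ≠ c := by
        rintro rfl
        exact ha (hmb.tail hbc)
      have hcmp : a ≤ c ∨ c ≤ a := by
        by_contra hcm
        push_neg at hcm
        exact ha ((hmb.tail hbc).tail ⟨hcm.2, hcm.1⟩)
      rcases hcmp with hle | hle
      · exact lt_of_le_of_ne hle hac
      · exact absurd (lt_of_le_of_lt hle ihab) (fun hh => hbc.2 hh.le)
  exact key c hc

end Aux

/-- A finite `{(2+2),(1+1+1)}`-free poset with `n ≥ 2` elements that is irreducible with
respect to ordinal sum has exactly `2n` lower sets (including `∅` and `P`). -/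
theorem statement15 {P : Type*} [PartialOrder P] [Fintype P]
    (hn : 2 ≤ Fintype.card P)
    (h22 : TwoTwoFree P) (h111 : OneOneOneFree P) (hirr : OrdinalSumIrreducible P) :
    Nat.card {s : Set P // IsLowerSet s} = 2 * Fintype.card P := by
  have hne : Nonempty P := Fintype.card_pos_iff.mp (by omega)
  exact aux_count (Fintype.card P) P rfl h22 h111 (conn_of_irr hirr) hne
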